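/- Let p ∈ ℕ^m (m ≥ 1) and q ∈ ℕ^n with Σ_i p_i = Σ_j q_j, let b = max_j q_j, and let r = q̄ ∈ ℕ^b be the counts vector of q. Suppose that for each s ∈ C^r(p_1) a vector w_s ∈ ℕ^n is given whose counts vector equals r ⊖ s = r − s + Ls. Then N(p,q) = Σ_{s ∈ C^r(p_1)} (∏_{i=1}^b binom(r_i, s_i)) · N((p_2,…,p_m), w_s). -/

import Mathlib

/-- Number of entries of `v` equal to `i` (the counts vector of `v`, evaluated at `i`). -/
def countAt {n : ℕ} (v : Fin n → ℕ) (i : ℕ) : ℕ :=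
  (Finset.univ.filter fun j => v j = i).card

/-- Left shift of a vector in `ℕ^b`: `(Ls)_i = s_{i+1}`, with a trailing zero. -/
def shiftL {b : ℕ} (s : Fin b → ℕ) : Fin b → ℕ :=
  fun i => if h : i.val + 1 < b then s ⟨i.val + 1, h⟩ else 0

/-- `C^r(k)`: the vectors `s ∈ ℕ^b` with `∑ s = k` and `s ≤ r` componentwise. -/
def compBdd {b : ℕ} (r : Fin b → ℕ) (k : ℕ) : Finset (Fin b → ℕ) :=
  (Finset.Nat.antidiagonalTuple b k).filter fun s => ∀ i, s i ≤ r i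

/-- `N(p,q)`: the number of `m × n` binary matrices with row sums `p` and column sums `q`. -/
noncomputable def Ncount {m n : ℕ} (p : Fin m → ℕ) (q : Fin n → ℕ) : ℕ :=
  Set.ncard {A : Fin m → Fin n → ℕ |
    (∀ i j, A i j ≤ 1) ∧ (∀ i, ∑ j, A i j = p i) ∧ (∀ j, ∑ i, A i j = q j)}

def matF {m n : ℕ} (p : Fin m → ℕ) (q : Fin n → ℕ) : Finset (Fin m → Fin n → ℕ) :=
  (Fintype.piFinset fun _ => Fintype.piFinset fun _ => Finset.range 2).filter
    fun A => (∀ i, ∑ j, A i j = p i) ∧ (∀ j, ∑ i, A i j = q j)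

lemma Ncount_eq_card {m n : ℕ} (p : Fin m → ℕ) (q : Fin n → ℕ) :
    Ncount p q = (matF p q).card := by
  rw [Ncount, ← Set.ncard_coe_finset]
  congr 1
  ext A
  simp only [matF, Finset.coe_filter, Set.mem_setOf_eq, Fintype.mem_piFinset,
    Finset.mem_range, Set.mem_setOf_eq]
  constructor
  · rintro ⟨h1, h2, h3⟩; exact ⟨fun i j => by have := h1 i j; omega, h2, h3⟩
  · rintro ⟨h1, h2, h3⟩; exact ⟨fun i j => by have := h1 i j; omega, h2, h3⟩

/-- permutation invariance -/
lemma Ncount_comp_equiv {m n : ℕ} (p : Fin m → ℕ) (q : Fin n → ℕ) (e : Equiv.Perm (Fin n)) :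
    Ncount p (q ∘ e) = Ncount p q := by
  rw [Ncount_eq_card, Ncount_eq_card]
  apply Finset.card_nbij' (fun A => fun i j => A i (e.symm j)) (fun A => fun i j => A i (e j))
  · intro A hA
    simp only [Finset.mem_coe, matF, Finset.mem_filter, Fintype.mem_piFinset, Finset.mem_range] at hA ⊢
    obtain ⟨h0, h2, h3⟩ := hA
    refine ⟨fun i j => h0 i (e.symm j), fun i => ?_, fun j => ?_⟩
    · rw [← h2 i]; exact Fintype.sum_equiv e.symm _ _ (fun j => rfl)
    · have := h3 (e.symm j); simpa using this
  · intro A hA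
    simp only [Finset.mem_coe, matF, Finset.mem_filter, Fintype.mem_piFinset, Finset.mem_range] at hA ⊢
    obtain ⟨h0, h2, h3⟩ := hA
    refine ⟨fun i j => h0 i (e j), fun i => ?_, fun j => ?_⟩
    · rw [← h2 i]; exact Fintype.sum_equiv e _ _ (fun j => rfl)
    · simpa using h3 (e j)
  · intro A _; funext i j; simp
  · intro A _; funext i j; simp

lemma countAt_zero_of_pos {n : ℕ} (q q' : Fin n → ℕ)
    (h : ∀ i, 1 ≤ i → countAt q i = countAt q' i) : countAt q 0 = countAt q' 0 := by
  classical
  set N := (Finset.univ.sup q) ⊔ (Finset.univ.sup q') with hN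
  have key : ∀ v : Fin n → ℕ, Finset.univ.sup v ≤ N →
      (Finset.univ.filter fun j => v j ≠ 0).card = ∑ i ∈ Finset.Ioc 0 N, countAt v i := by
    intro v hv
    rw [Finset.card_eq_sum_card_fiberwise (f := v) (t := Finset.Ioc 0 N)]
    · apply Finset.sum_congr rfl
      intro i hi
      rw [Finset.mem_Ioc] at hi
      unfold countAt
      congr 1
      ext j
      simp only [Finset.mem_filter, Finset.mem_univ, true_and]
      constructor
      · rintro ⟨_, h2⟩; exact h2
      · intro h2; exact ⟨by omega, h2⟩
    · intro j hj
      simp only [Finset.mem_coe, Finset.mem_filter, Finset.mem_univ, true_and] at hj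
      rw [Finset.mem_coe, Finset.mem_Ioc]
      exact ⟨Nat.pos_of_ne_zero hj, le_trans (Finset.le_sup (Finset.mem_univ j)) hv⟩
  have h1 := key q le_sup_left
  have h2 := key q' le_sup_right
  have hsum : ∑ i ∈ Finset.Ioc 0 N, countAt q i = ∑ i ∈ Finset.Ioc 0 N, countAt q' i :=
    Finset.sum_congr rfl fun i hi => h i (Finset.mem_Ioc.mp hi).1
  have e1 : (Finset.univ.filter fun j => q j = 0).card
      = n - (Finset.univ.filter fun j => q j ≠ 0).card := by
    have := Finset.card_filter_add_card_filter_not (s := (Finset.univ : Finset (Fin n)))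
      (p := fun j => q j = 0)
    simp only [Finset.card_univ, Fintype.card_fin] at this
    simp only [ne_eq]
    omega
  have e2 : (Finset.univ.filter fun j => q' j = 0).card
      = n - (Finset.univ.filter fun j => q' j ≠ 0).card := by
    have := Finset.card_filter_add_card_filter_not (s := (Finset.univ : Finset (Fin n)))
      (p := fun j => q' j = 0)
    simp only [Finset.card_univ, Fintype.card_fin] at this
    simp only [ne_eq]
    omega
  unfold countAt
  rw [e1, e2, h1, h2, hsum]

lemma exists_perm_of_countAt_eq {n : ℕ} (q q' : Fin n → ℕ)
    (h : ∀ i, 1 ≤ i → countAt q i = countAt q' i) :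
    ∃ e : Equiv.Perm (Fin n), q' = q ∘ e := by
  classical
  have hall : ∀ i, countAt q i = countAt q' i := by
    intro i
    rcases Nat.eq_zero_or_pos i with rfl | hi
    · exact countAt_zero_of_pos q q' h
    · exact h i hi
  have hcard : ∀ i : ℕ, Fintype.card {j // q' j = i} = Fintype.card {j // q j = i} := by
    intro i
    rw [Fintype.card_subtype, Fintype.card_subtype]
    exact (hall i).symm
  let F : ∀ i : ℕ, {j // q' j = i} ≃ {j // q j = i} := fun i => Fintype.equivOfCardEq (hcard i)
  let e : Fin n ≃ Fin n :=
    ((Equiv.sigmaFiberEquiv q').symm.trans (Equiv.sigmaCongrRight F)).trans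
      (Equiv.sigmaFiberEquiv q)
  refine ⟨e, funext fun j => ?_⟩
  show q' j = q (e j)
  have : e j = (F (q' j) ⟨j, rfl⟩).val := rfl
  rw [this]
  exact ((F (q' j) ⟨j, rfl⟩).property).symm

lemma Ncount_eq_of_countAt_eq {m n : ℕ} (p : Fin m → ℕ) (q q' : Fin n → ℕ)
    (h : ∀ i, 1 ≤ i → countAt q i = countAt q' i) : Ncount p q = Ncount p q' := by
  obtain ⟨e, he⟩ := exists_perm_of_countAt_eq q q' h
  rw [he, Ncount_comp_equiv]

def rowsF {n : ℕ} (q : Fin n → ℕ) (k : ℕ) : Finset (Fin n → ℕ) :=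
  (Fintype.piFinset fun _ => Finset.range 2).filter
    fun x => (∑ j, x j = k) ∧ ∀ j, x j ≤ q j

lemma matF_card_eq_sum_rows {m n : ℕ} (p : Fin (m + 1) → ℕ) (q : Fin n → ℕ) :
    (matF p q).card = ∑ x ∈ rowsF q (p 0),
      (matF (p ∘ Fin.succ) (fun j => q j - x j)).card := by
  classical
  rw [Finset.card_eq_sum_card_fiberwise (f := fun A => A 0) (t := rowsF q (p 0))]
  · apply Finset.sum_congr rfl
    intro x hx
    simp only [rowsF, Finset.mem_filter, Fintype.mem_piFinset, Finset.mem_range] at hx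
    obtain ⟨hx01, hxsum, hxle⟩ := hx
    apply Finset.card_nbij' (fun A => A ∘ Fin.succ) (fun B => Fin.cons x B)
    · intro A hA
      simp only [Finset.mem_coe, Finset.mem_filter, matF, Fintype.mem_piFinset, Finset.mem_range] at hA ⊢
      obtain ⟨⟨h0, h2, h3⟩, h4⟩ := hA
      refine ⟨fun i j => h0 _ j, fun i => h2 _, fun j => ?_⟩
      have := h3 j
      rw [Fin.sum_univ_succ, h4] at this
      simp only [Function.comp_apply]
      omega
    · intro B hB
      simp only [Finset.mem_coe, Finset.mem_filter, matF, Fintype.mem_piFinset, Finset.mem_range] at hB ⊢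
      obtain ⟨h0, h2, h3⟩ := hB
      refine ⟨⟨fun i j => ?_, fun i => ?_, fun j => ?_⟩, ?_⟩
      · refine Fin.cases ?_ ?_ i
        · simpa using hx01 j
        · intro k; simpa using h0 k j
      · refine Fin.cases ?_ ?_ i
        · simpa using hxsum
        · intro k; simpa using h2 k
      · rw [Fin.sum_univ_succ]
        simp only [Fin.cons_zero, Fin.cons_succ]
        have := h3 j
        have := hxle j
        simp only [Function.comp_apply] at *
        omega
      · simp
    · intro A hA
      exact funext fun i => Fin.cases (by simp [(Finset.mem_filter.mp hA).2]) (fun k => by simp) i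
    · intro B hB
      funext i j
      simp
  · intro A hA
    simp only [Finset.mem_coe, Finset.mem_filter, matF, Fintype.mem_piFinset, Finset.mem_range] at hA
    obtain ⟨h0, h2, h3⟩ := hA
    simp only [Finset.mem_coe, rowsF, Finset.mem_filter, Fintype.mem_piFinset, Finset.mem_range]
    refine ⟨fun j => h0 0 j, h2 0, fun j => ?_⟩
    rw [← h3 j]
    exact Finset.single_le_sum (f := fun i => A i j) (fun i _ => Nat.zero_le _)
      (Finset.mem_univ 0)

def sOf (b : ℕ) {n : ℕ} (q x : Fin n → ℕ) : Fin b → ℕ :=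
  fun i => (Finset.univ.filter fun j => q j = i.val + 1 ∧ x j = 1).card

lemma sum_eq_card_support {n : ℕ} (x : Fin n → ℕ) (hx : ∀ j, x j ≤ 1) :
    ∑ j, x j = (Finset.univ.filter fun j => x j = 1).card := by
  rw [Finset.card_filter]
  apply Finset.sum_congr rfl
  intro j _
  have := hx j
  split <;> omega

lemma biUnion_fibers {n b : ℕ} (q x : Fin n → ℕ) (hqb : ∀ j, q j ≤ b)
    (hxq : ∀ j, x j ≤ q j) :
    Finset.univ.biUnion (fun i : Fin b =>
      Finset.univ.filter fun j => q j = i.val + 1 ∧ x j = 1)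
      = Finset.univ.filter fun j => x j = 1 := by
  ext j
  simp only [Finset.mem_biUnion, Finset.mem_univ, true_and, Finset.mem_filter]
  constructor
  · rintro ⟨i, _, hx1⟩; exact hx1
  · intro hx1
    have h1 : 1 ≤ q j := le_trans (le_of_eq hx1.symm) (hxq j)
    have h2 : q j ≤ b := hqb j
    exact ⟨⟨q j - 1, by omega⟩, by show q j = q j - 1 + 1; omega, hx1⟩

lemma fibers_disjoint {n b : ℕ} (q x : Fin n → ℕ) :
    ∀ i ∈ (Finset.univ : Finset (Fin b)), ∀ i' ∈ Finset.univ, i ≠ i' →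
      Disjoint (Finset.univ.filter fun j => q j = i.val + 1 ∧ x j = 1)
        (Finset.univ.filter fun j => q j = i'.val + 1 ∧ x j = 1) := by
  intro i _ i' _ hne
  rw [Finset.disjoint_left]
  intro j hj hj'
  simp only [Finset.mem_filter, Finset.mem_univ, true_and] at hj hj'
  exact hne (Fin.ext (by omega))

lemma sOf_mem {n b : ℕ} (q : Fin n → ℕ) (r : Fin b → ℕ)
    (hr : ∀ i : Fin b, r i = countAt q (i.val + 1)) (hqb : ∀ j, q j ≤ b) (k : ℕ)
    (x : Fin n → ℕ) (hx : x ∈ rowsF q k) : sOf b q x ∈ compBdd r k := by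
  simp only [rowsF, Finset.mem_filter, Fintype.mem_piFinset, Finset.mem_range] at hx
  obtain ⟨h01, hsum, hle⟩ := hx
  rw [compBdd, Finset.mem_filter, Finset.Nat.mem_antidiagonalTuple]
  constructor
  · rw [← hsum, sum_eq_card_support x (fun j => by have := h01 j; omega),
      ← biUnion_fibers q x hqb hle, Finset.card_biUnion (fibers_disjoint q x)]
    rfl
  · intro i
    rw [hr i]
    exact Finset.card_le_card (fun j hj => by
      simp only [Finset.mem_filter, Finset.mem_univ, true_and, countAt] at hj ⊢
      exact hj.1)

lemma fiber_card {n b : ℕ} (q : Fin n → ℕ) (r : Fin b → ℕ)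
    (hr : ∀ i : Fin b, r i = countAt q (i.val + 1)) (hqb : ∀ j, q j ≤ b) (k : ℕ)
    (s : Fin b → ℕ) (hs : s ∈ compBdd r k) :
    ((rowsF q k).filter fun x => sOf b q x = s).card = ∏ i, (r i).choose (s i) := by
  classical
  rw [compBdd, Finset.mem_filter, Finset.Nat.mem_antidiagonalTuple] at hs
  obtain ⟨hssum, hsle⟩ := hs
  have hcard : ∏ i, (r i).choose (s i) =
      (Fintype.piFinset fun i : Fin b =>
        (Finset.univ.filter fun j => q j = i.val + 1).powersetCard (s i)).card := by
    rw [Fintype.card_piFinset]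
    apply Finset.prod_congr rfl
    intro i _
    rw [Finset.card_powersetCard]
    congr 1
    rw [hr i]; rfl
  rw [hcard]
  apply Finset.card_nbij'
    (fun x => fun i => Finset.univ.filter fun j => q j = i.val + 1 ∧ x j = 1)
    (fun T => fun j => if j ∈ Finset.univ.biUnion T then 1 else 0)
  · intro x hx
    rw [Finset.mem_coe, Finset.mem_filter] at hx
    obtain ⟨hx, hsx⟩ := hx
    rw [Finset.mem_coe, Fintype.mem_piFinset]
    intro i
    rw [Finset.mem_powersetCard]
    constructor
    · intro j hj
      simp only [Finset.mem_filter, Finset.mem_univ, true_and] at hj ⊢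
      exact hj.1
    · rw [← hsx]; rfl
  · intro T hT
    rw [Finset.mem_coe, Fintype.mem_piFinset] at hT
    have hTsub : ∀ i, T i ⊆ Finset.univ.filter fun j => q j = i.val + 1 :=
      fun i => (Finset.mem_powersetCard.mp (hT i)).1
    have hTcard : ∀ i, (T i).card = s i := fun i => (Finset.mem_powersetCard.mp (hT i)).2
    have hTq : ∀ i, ∀ j ∈ T i, q j = i.val + 1 := by
      intro i j hj
      have := hTsub i hj
      simp only [Finset.mem_filter, Finset.mem_univ, true_and] at this
      exact this
    have hdisj : ∀ i ∈ (Finset.univ : Finset (Fin b)), ∀ i' ∈ Finset.univ, i ≠ i' →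
        Disjoint (T i) (T i') := by
      intro i _ i' _ hne
      rw [Finset.disjoint_left]
      intro j hj hj'
      exact hne (Fin.ext (by have := hTq i j hj; have := hTq i' j hj'; omega))
    have hmemB : ∀ j i, j ∈ T i ↔ (q j = i.val + 1 ∧ j ∈ Finset.univ.biUnion T) := by
      intro j i
      constructor
      · intro hj
        exact ⟨hTq i j hj, Finset.mem_biUnion.mpr ⟨i, Finset.mem_univ i, hj⟩⟩
      · rintro ⟨hq, hB⟩
        obtain ⟨i', _, hj'⟩ := Finset.mem_biUnion.mp hB
        have : i' = i := Fin.ext (by have := hTq i' j hj'; omega)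
        exact this ▸ hj'
    rw [Finset.mem_coe, Finset.mem_filter]
    constructor
    · simp only [rowsF, Finset.mem_filter, Fintype.mem_piFinset, Finset.mem_range]
      refine ⟨fun j => by split <;> omega, ?_, ?_⟩
      · rw [sum_eq_card_support _ (fun j => by split <;> omega)]
        have : (Finset.univ.filter fun j =>
            (if j ∈ Finset.univ.biUnion T then 1 else 0) = 1) = Finset.univ.biUnion T := by
          ext j
          simp only [Finset.mem_filter, Finset.mem_univ, true_and]
          split
          · next h => simp [h]
          · next h => simp [h]
        rw [this, Finset.card_biUnion hdisj, ← hssum]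
        exact Finset.sum_congr rfl fun i _ => hTcard i
      · intro j
        split
        · next h =>
          obtain ⟨i, _, hj⟩ := Finset.mem_biUnion.mp h
          have := hTq i j hj
          omega
        · exact Nat.zero_le _
    · funext i
      rw [← hTcard i, sOf]
      congr 1
      ext j
      simp only [Finset.mem_filter, Finset.mem_univ, true_and]
      rw [hmemB j i]
      constructor
      · rintro ⟨hq, hx1⟩
        refine ⟨hq, ?_⟩
        by_contra hB
        simp [hB] at hx1
      · rintro ⟨hq, hB⟩
        exact ⟨hq, by simp [hB]⟩
  · intro x hx
    rw [Finset.mem_coe, Finset.mem_filter] at hx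
    obtain ⟨hx, _⟩ := hx
    simp only [rowsF, Finset.mem_filter, Fintype.mem_piFinset, Finset.mem_range] at hx
    obtain ⟨h01, hsum, hle⟩ := hx
    funext j
    beta_reduce
    rw [biUnion_fibers q x hqb hle]
    have := h01 j
    simp only [Finset.mem_filter, Finset.mem_univ, true_and]
    split <;> omega
  · intro T hT
    rw [Finset.mem_coe, Fintype.mem_piFinset] at hT
    have hTq : ∀ i, ∀ j ∈ T i, q j = i.val + 1 := by
      intro i j hj
      have := (Finset.mem_powersetCard.mp (hT i)).1 hj
      simp only [Finset.mem_filter, Finset.mem_univ, true_and] at this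
      exact this
    funext i
    ext j
    simp only [Finset.mem_filter, Finset.mem_univ, true_and]
    constructor
    · rintro ⟨hq, hx1⟩
      have hB : j ∈ Finset.univ.biUnion T := by
        by_contra hB
        simp [hB] at hx1
      obtain ⟨i', _, hj'⟩ := Finset.mem_biUnion.mp hB
      have : i' = i := Fin.ext (by have := hTq i' j hj'; omega)
      exact this ▸ hj'
    · intro hj
      exact ⟨hTq i j hj, by simp [Finset.mem_biUnion.mpr ⟨i, Finset.mem_univ i, hj⟩]⟩

lemma countAt_sub_one {n b : ℕ} (q x : Fin n → ℕ) (r : Fin b → ℕ)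
    (hr : ∀ i : Fin b, r i = countAt q (i.val + 1)) (hqb : ∀ j, q j ≤ b)
    (h01 : ∀ j, x j ≤ 1) (hle : ∀ j, x j ≤ q j) (s : Fin b → ℕ)
    (hsx : sOf b q x = s) (i0 : Fin b) :
    countAt (fun j => q j - x j) (i0.val + 1) = (r i0 - s i0) + shiftL s i0 := by
  classical
  have hsplit : (Finset.univ.filter fun j => q j - x j = i0.val + 1) =
      (Finset.univ.filter fun j => q j = i0.val + 1 ∧ x j = 0) ∪
      (Finset.univ.filter fun j => q j = i0.val + 1 + 1 ∧ x j = 1) := by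
    ext j
    simp only [Finset.mem_union, Finset.mem_filter, Finset.mem_univ, true_and]
    have := h01 j; have := hle j
    omega
  have hdisj : Disjoint (Finset.univ.filter fun j => q j = i0.val + 1 ∧ x j = 0)
      (Finset.univ.filter fun j => q j = i0.val + 1 + 1 ∧ x j = 1) := by
    rw [Finset.disjoint_left]
    intro j hj hj'
    simp only [Finset.mem_filter, Finset.mem_univ, true_and] at hj hj'
    omega
  have hc1 : (Finset.univ.filter fun j => q j = i0.val + 1 ∧ x j = 0).card
      = r i0 - s i0 := by
    have hsplit2 : (Finset.univ.filter fun j => q j = i0.val + 1) =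
        (Finset.univ.filter fun j => q j = i0.val + 1 ∧ x j = 1) ∪
        (Finset.univ.filter fun j => q j = i0.val + 1 ∧ x j = 0) := by
      ext j
      simp only [Finset.mem_union, Finset.mem_filter, Finset.mem_univ, true_and]
      have := h01 j
      omega
    have hdisj2 : Disjoint (Finset.univ.filter fun j => q j = i0.val + 1 ∧ x j = 1)
        (Finset.univ.filter fun j => q j = i0.val + 1 ∧ x j = 0) := by
      rw [Finset.disjoint_left]
      intro j hj hj'
      simp only [Finset.mem_filter, Finset.mem_univ, true_and] at hj hj'
      omega
    have := hr i0
    rw [countAt] at this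
    rw [hsplit2, Finset.card_union_of_disjoint hdisj2] at this
    have hs1 : (Finset.univ.filter fun j => q j = i0.val + 1 ∧ x j = 1).card = s i0 := by
      rw [← hsx]; rfl
    omega
  have hc2 : (Finset.univ.filter fun j => q j = i0.val + 1 + 1 ∧ x j = 1).card
      = shiftL s i0 := by
    rw [shiftL]
    split
    · next h =>
      rw [← hsx]
      rfl
    · next h =>
      have hb' : i0.val + 1 = b := by have := i0.isLt; omega
      rw [Finset.card_eq_zero]
      rw [Finset.filter_eq_empty_iff]
      intro j _
      have := hqb j
      omega
  rw [countAt, hsplit, Finset.card_union_of_disjoint hdisj, hc1, hc2]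

lemma countAt_sub_big {n b : ℕ} (q x : Fin n → ℕ) (hqb : ∀ j, q j ≤ b)
    (i : ℕ) (hi : b < i) : countAt (fun j => q j - x j) i = 0 := by
  rw [countAt, Finset.card_eq_zero, Finset.filter_eq_empty_iff]
  intro j _
  have := hqb j
  omega

theorem stmt0 {m n : ℕ} (p : Fin (m + 1) → ℕ) (q : Fin n → ℕ)
    (hsum : ∑ i, p i = ∑ j, q j)
    (b : ℕ) (hb : b = Finset.univ.sup q)
    (r : Fin b → ℕ) (hr : ∀ i : Fin b, r i = countAt q (i.val + 1))
    (w : (Fin b → ℕ) → (Fin n → ℕ))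
    (hw : ∀ s ∈ compBdd r (p 0),
      (∀ i : Fin b, countAt (w s) (i.val + 1) = r i + shiftL s i - s i) ∧
      (∀ i : ℕ, b < i → countAt (w s) i = 0)) :
    Ncount p q =
      ∑ s ∈ compBdd r (p 0),
        (∏ i, Nat.choose (r i) (s i)) * Ncount (p ∘ Fin.succ) (w s) := by
  classical
  have hqb : ∀ j, q j ≤ b := fun j => hb ▸ Finset.le_sup (Finset.mem_univ j)
  rw [Ncount_eq_card, matF_card_eq_sum_rows]
  rw [← Finset.sum_fiberwise_of_maps_to (g := fun x => sOf b q x)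
    (fun x hx => sOf_mem q r hr hqb (p 0) x hx)
    (fun x => (matF (p ∘ Fin.succ) fun j => q j - x j).card)]
  apply Finset.sum_congr rfl
  intro s hs
  have hterm : ∀ x ∈ (rowsF q (p 0)).filter fun x => sOf b q x = s,
      (matF (p ∘ Fin.succ) fun j => q j - x j).card
        = Ncount (p ∘ Fin.succ) (w s) := by
    intro x hx
    rw [Finset.mem_filter] at hx
    obtain ⟨hx, hsx⟩ := hx
    have hxm := hx
    simp only [rowsF, Finset.mem_filter, Fintype.mem_piFinset, Finset.mem_range] at hxm
    obtain ⟨h01, hxsum, hxle⟩ := hxm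
    rw [← Ncount_eq_card]
    apply Ncount_eq_of_countAt_eq
    intro i hi
    obtain ⟨hw1, hw2⟩ := hw s hs
    rcases le_or_gt i b with hib | hib
    · have hi0 : i - 1 < b := by omega
      have : i = (⟨i - 1, hi0⟩ : Fin b).val + 1 := by simp; omega
      rw [this, countAt_sub_one q x r hr hqb (fun j => by have := h01 j; omega) hxle s hsx,
        hw1]
      have hsle : s ⟨i - 1, hi0⟩ ≤ r ⟨i - 1, hi0⟩ := by
        rw [compBdd, Finset.mem_filter] at hs
        exact hs.2 _
      omega
    · rw [countAt_sub_big q x hqb i hib, hw2 i hib]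
  rw [Finset.sum_congr rfl hterm, Finset.sum_const, smul_eq_mul,
    fiber_card q r hr hqb (p 0) s hs]
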